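/- Let d ≥ 2 and let n = (n₁,…,n_d) ∈ ℂ^d satisfy Σᵢ nᵢ² = 1. Then the constant-coefficient operator T := Δ − (n·∂)², where Δ = Σᵢ ∂²/∂ξᵢ² and n·∂ = Σᵢ nᵢ ∂/∂ξᵢ, is surjective as a linear map from ℂ[ξ₁,…,ξ_d] to itself: for every polynomial σ there exists a polynomial α with (Δ − (n·∂)²)α = σ. (Paper: the solvability of equation (1.6), the core reduction in the proof of Proposition 5.1; it fails for d = 1, corresponding to the excluded two-dimensional space-time.) -/

import Mathlib

/-!
Core reduction in the proof of Proposition 5.1 (equation (1.6)): for `d ≥ 2`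
and `n ∈ ℂ^d` with `Σᵢ nᵢ² = 1`, the operator `Δ − (n·∂)²` is surjective on
the polynomial ring `ℂ[ξ₁,…,ξ_d]`.
-/

open MvPolynomial

/-- The Laplacian `Δ = Σᵢ ∂²/∂ξᵢ²` on `ℂ[ξ₁,…,ξ_d]`. -/
noncomputable def lap {d : ℕ} (f : MvPolynomial (Fin d) ℂ) : MvPolynomial (Fin d) ℂ :=
  ∑ i : Fin d, pderiv i (pderiv i f)

/-- The directional derivative `n·∂ = Σᵢ nᵢ ∂/∂ξᵢ` on `ℂ[ξ₁,…,ξ_d]`. -/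
noncomputable def ndel {d : ℕ} (n : Fin d → ℂ) (f : MvPolynomial (Fin d) ℂ) :
    MvPolynomial (Fin d) ℂ :=
  ∑ i : Fin d, C (n i) * pderiv i f

variable {d : ℕ}


/-- weight `a! = ∏ i, (a i)!` as a complex number -/
noncomputable def wt (a : Fin d →₀ ℕ) : ℂ := ∏ i, (Nat.factorial (a i) : ℂ)

lemma wt_ne_zero (a : Fin d →₀ ℕ) : wt a ≠ 0 := by
  refine Finset.prod_ne_zero_iff.2 fun i _ => ?_
  exact_mod_cast (Nat.factorial_pos (a i)).ne'

/-- The apolarity pairing `⟨f,g⟩ = ∑ a, a! f_a g_a`. -/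
noncomputable def Bfun (f g : MvPolynomial (Fin d) ℂ) : ℂ :=
  ∑ a ∈ f.support, wt a * coeff a f * coeff a g

lemma Bfun_eq_sum {f g : MvPolynomial (Fin d) ℂ} {s : Finset (Fin d →₀ ℕ)}
    (h : f.support ⊆ s) : Bfun f g = ∑ a ∈ s, wt a * coeff a f * coeff a g := by
  refine Finset.sum_subset h fun a _ ha => ?_
  rw [MvPolynomial.notMem_support_iff.mp ha]; ring

lemma Bfun_add_left (f f' g : MvPolynomial (Fin d) ℂ) :
    Bfun (f + f') g = Bfun f g + Bfun f' g := by
  rw [Bfun_eq_sum (s := f.support ∪ f'.support) MvPolynomial.support_add,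
    Bfun_eq_sum (f := f) (s := f.support ∪ f'.support) Finset.subset_union_left,
    Bfun_eq_sum (f := f') (s := f.support ∪ f'.support) Finset.subset_union_right,
    ← Finset.sum_add_distrib]
  refine Finset.sum_congr rfl fun a _ => ?_
  rw [coeff_add]; ring

lemma Bfun_smul_left (c : ℂ) (f g : MvPolynomial (Fin d) ℂ) :
    Bfun (c • f) g = c * Bfun f g := by
  rw [Bfun_eq_sum (s := f.support) (MvPolynomial.support_smul), Bfun, Finset.mul_sum]
  refine Finset.sum_congr rfl fun a _ => ?_
  rw [MvPolynomial.coeff_smul, smul_eq_mul]; ring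

lemma Bfun_add_right (f g g' : MvPolynomial (Fin d) ℂ) :
    Bfun f (g + g') = Bfun f g + Bfun f g' := by
  rw [Bfun, Bfun, Bfun, ← Finset.sum_add_distrib]
  refine Finset.sum_congr rfl fun a _ => ?_
  rw [coeff_add]; ring

lemma Bfun_smul_right (c : ℂ) (f g : MvPolynomial (Fin d) ℂ) :
    Bfun f (c • g) = c * Bfun f g := by
  rw [Bfun, Bfun, Finset.mul_sum]
  refine Finset.sum_congr rfl fun a _ => ?_
  rw [MvPolynomial.coeff_smul, smul_eq_mul]; ring

/-- Bundled bilinear pairing. -/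
noncomputable def Bform : MvPolynomial (Fin d) ℂ →ₗ[ℂ] MvPolynomial (Fin d) ℂ →ₗ[ℂ] ℂ :=
  LinearMap.mk₂ ℂ Bfun Bfun_add_left (fun c f g => by rw [Bfun_smul_left]; rfl)
    Bfun_add_right (fun c f g => by rw [Bfun_smul_right]; rfl)

lemma Bfun_monomial_left (a : Fin d →₀ ℕ) (c : ℂ) (g : MvPolynomial (Fin d) ℂ) :
    Bfun (monomial a c) g = wt a * c * coeff a g := by
  rcases eq_or_ne c 0 with rfl | hc
  · simp [Bfun]
  · rw [Bfun_eq_sum (s := {a}) (MvPolynomial.support_monomial_subset), Finset.sum_singleton,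
      coeff_monomial, if_pos rfl]

lemma single_sub_cond {i : Fin d} {b a : Fin d →₀ ℕ} (hb : b i ≠ 0) :
    b - Finsupp.single i 1 = a ↔ b = a + Finsupp.single i 1 := by
  constructor
  · rintro rfl
    ext j
    simp only [Finsupp.coe_add, Finsupp.coe_tsub, Pi.add_apply, Pi.sub_apply,
      Finsupp.single_apply]
    rcases eq_or_ne i j with rfl | hij
    · simp only [if_pos rfl, if_true]
      omega
    · simp [hij]
  · rintro rfl
    ext j
    simp only [Finsupp.coe_add, Finsupp.coe_tsub, Pi.add_apply, Pi.sub_apply,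
      Finsupp.single_apply]
    rcases eq_or_ne i j with rfl | hij
    · simp only [if_pos rfl, if_true]
      omega
    · simp [hij]

lemma wt_succ {i : Fin d} {a : Fin d →₀ ℕ} :
    wt (a + Finsupp.single i 1) = ((a i : ℂ) + 1) * wt a := by
  unfold wt
  rw [← Finset.mul_prod_erase Finset.univ _ (Finset.mem_univ i),
    ← Finset.mul_prod_erase Finset.univ (fun j => ((Nat.factorial (a j)) : ℂ)) (Finset.mem_univ i),
    ← mul_assoc]
  congr 1
  · have h1 : (a + Finsupp.single i 1 : Fin d →₀ ℕ) i = a i + 1 := by simp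
    rw [h1, Nat.factorial_succ]
    push_cast; ring
  · refine Finset.prod_congr rfl fun j hj => ?_
    have hij : i ≠ j := fun h => (Finset.mem_erase.mp hj).1 h.symm
    congr 2
    simp [Finsupp.single_apply, hij]

lemma Bfun_pderiv (i : Fin d) (f g : MvPolynomial (Fin d) ℂ) :
    Bfun (pderiv i f) g = Bfun f (X i * g) := by
  induction f using MvPolynomial.induction_on' with
  | add p q hp hq => rw [map_add, Bfun_add_left, Bfun_add_left, hp, hq]
  | monomial b c =>
    rw [pderiv_monomial, Bfun_monomial_left, Bfun_monomial_left]
    rcases Nat.eq_zero_or_pos (b i) with hb | hb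
    · rw [hb, coeff_X_mul' b i g, if_neg (by simp [Finsupp.mem_support_iff, hb])]
      push_cast; ring
    · rw [coeff_X_mul' b i g, if_pos (by simp [Finsupp.mem_support_iff]; omega)]
      have hba : b = (b - Finsupp.single i 1) + Finsupp.single i 1 :=
        ((single_sub_cond (a := b - Finsupp.single i 1) (by omega)).mp rfl)
      have hbi : (b - Finsupp.single i 1 : Fin d →₀ ℕ) i = b i - 1 := by
        simp [Finsupp.single_apply]
      rw [show wt b = (((b - Finsupp.single i 1 : Fin d →₀ ℕ) i : ℂ) + 1)
            * wt (b - Finsupp.single i 1) by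
        conv_lhs => rw [hba]; rw [wt_succ]]
      rw [hbi]
      have hcast : ((b i - 1 : ℕ) : ℂ) + 1 = (b i : ℂ) := by
        have h2 : b i - 1 + 1 = b i := by omega
        exact_mod_cast congrArg (Nat.cast : ℕ → ℂ) h2
      rw [hcast]; push_cast; ring

lemma coeff_pderiv' (i : Fin d) (f : MvPolynomial (Fin d) ℂ) (a : Fin d →₀ ℕ) :
    coeff a (pderiv i f) = ((a i : ℂ) + 1) * coeff (a + Finsupp.single i 1) f := by
  induction f using MvPolynomial.induction_on' with
  | add p q hp hq => rw [map_add, coeff_add, coeff_add, hp, hq]; ring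
  | monomial b c =>
    rw [pderiv_monomial, coeff_monomial, coeff_monomial]
    rcases Nat.eq_zero_or_pos (b i) with hb | hb
    · have hne : b ≠ a + Finsupp.single i 1 := fun h => by
        have h2 := congrArg (fun m : Fin d →₀ ℕ => m i) h
        simp [Finsupp.single_apply] at h2
        omega
      rw [if_neg hne, mul_zero]
      split <;> simp [hb]
    · rcases eq_or_ne b (a + Finsupp.single i 1) with rfl | hne
      · rw [if_pos ((single_sub_cond (by omega)).mpr rfl), if_pos rfl]
        have hbi : (a + Finsupp.single i 1 : Fin d →₀ ℕ) i = a i + 1 := by simp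
        rw [hbi]; push_cast; ring
      · rw [if_neg (fun h => hne ((single_sub_cond (by omega)).mp h)), if_neg hne, mul_zero]

/-- `Δ − (n·∂)²` as a bundled linear map. -/
noncomputable def Tlin (n : Fin d → ℂ) : MvPolynomial (Fin d) ℂ →ₗ[ℂ] MvPolynomial (Fin d) ℂ :=
  (∑ i : Fin d, (pderiv i).toLinearMap ∘ₗ (pderiv i).toLinearMap)
    - ((∑ i : Fin d, n i • (pderiv i).toLinearMap)
        ∘ₗ (∑ i : Fin d, n i • (pderiv i).toLinearMap))

lemma ndel_eq (n : Fin d → ℂ) (f : MvPolynomial (Fin d) ℂ) :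
    ndel n f = (∑ i : Fin d, n i • (pderiv i).toLinearMap) f := by
  rw [ndel, LinearMap.sum_apply]
  refine Finset.sum_congr rfl fun i _ => ?_
  rw [LinearMap.smul_apply, smul_eq_C_mul]
  rfl

lemma Tlin_apply (n : Fin d → ℂ) (f : MvPolynomial (Fin d) ℂ) :
    Tlin n f = lap f - ndel n (ndel n f) := by
  rw [Tlin, LinearMap.sub_apply, LinearMap.sum_apply, LinearMap.comp_apply, lap,
    ndel_eq, ndel_eq]
  rfl

/-- The symbol `Q = Σ Xᵢ² − (Σ nᵢ Xᵢ)²`. -/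
noncomputable def Qpoly (n : Fin d → ℂ) : MvPolynomial (Fin d) ℂ :=
  (∑ i : Fin d, X i ^ 2) - (∑ i : Fin d, C (n i) * X i) ^ 2

lemma Bfun_ndel (n : Fin d → ℂ) (h g : MvPolynomial (Fin d) ℂ) :
    Bfun (ndel n h) g = Bfun h ((∑ i : Fin d, C (n i) * X i) * g) := by
  have : ndel n h = ∑ i : Fin d, n i • pderiv i h := by
    rw [ndel]; exact Finset.sum_congr rfl fun i _ => (smul_eq_C_mul _ _).symm
  rw [this]
  have hL : Bfun (∑ i : Fin d, n i • pderiv i h) g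
      = ∑ i : Fin d, n i * Bfun (pderiv i h) g := by
    induction (Finset.univ : Finset (Fin d)) using Finset.induction_on with
    | empty => simp [show Bfun (0 : MvPolynomial (Fin d) ℂ) g = 0 from by simp [Bfun]]
    | insert _ _ hx ih =>
      rw [Finset.sum_insert hx, Finset.sum_insert hx, Bfun_add_left, Bfun_smul_left, ih]
  rw [hL, Finset.sum_mul]
  have : ∀ i : Fin d, n i * Bfun (pderiv i h) g = Bfun h ((C (n i) * X i) * g) := by
    intro i
    rw [Bfun_pderiv, mul_assoc, ← smul_eq_C_mul, Bfun_smul_right]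
  rw [Finset.sum_congr rfl fun i _ => this i]
  -- now sum over second argument
  induction (Finset.univ : Finset (Fin d)) using Finset.induction_on with
  | empty => simp [show Bfun h 0 = 0 from by simp [Bfun]]
  | insert _ _ hx ih =>
    rw [Finset.sum_insert hx, Finset.sum_insert hx, Bfun_add_right, ih]

lemma Bfun_lap (f g : MvPolynomial (Fin d) ℂ) :
    Bfun (lap f) g = Bfun f ((∑ i : Fin d, X i ^ 2) * g) := by
  rw [lap]
  have hL : Bfun (∑ i : Fin d, pderiv i (pderiv i f)) g
      = ∑ i : Fin d, Bfun (pderiv i (pderiv i f)) g := by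
    induction (Finset.univ : Finset (Fin d)) using Finset.induction_on with
    | empty => simp [show Bfun (0 : MvPolynomial (Fin d) ℂ) g = 0 from by simp [Bfun]]
    | insert _ _ hx ih =>
      rw [Finset.sum_insert hx, Finset.sum_insert hx, Bfun_add_left, ih]
  rw [hL, Finset.sum_mul]
  have h1 : ∀ i : Fin d, Bfun (pderiv i (pderiv i f)) g = Bfun f (X i ^ 2 * g) := by
    intro i
    rw [Bfun_pderiv, Bfun_pderiv, sq, mul_assoc]
  rw [Finset.sum_congr rfl fun i _ => h1 i]
  induction (Finset.univ : Finset (Fin d)) using Finset.induction_on with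
  | empty => simp [show Bfun f 0 = 0 from by simp [Bfun]]
  | insert _ _ hx ih =>
    rw [Finset.sum_insert hx, Finset.sum_insert hx, Bfun_add_right, ih]

lemma Bfun_sub_left (f f' g : MvPolynomial (Fin d) ℂ) :
    Bfun (f - f') g = Bfun f g - Bfun f' g := by
  have h := Bfun_add_left (f - f') f' g
  rw [sub_add_cancel] at h
  exact eq_sub_of_add_eq h.symm

lemma Bfun_sub_right (f g g' : MvPolynomial (Fin d) ℂ) :
    Bfun f (g - g') = Bfun f g - Bfun f g' := by
  have h := Bfun_add_right f (g - g') g'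
  rw [sub_add_cancel] at h
  exact eq_sub_of_add_eq h.symm

lemma Bfun_T (n : Fin d → ℂ) (f g : MvPolynomial (Fin d) ℂ) :
    Bfun (lap f - ndel n (ndel n f)) g = Bfun f (Qpoly n * g) := by
  rw [Bfun_sub_left, Bfun_lap, Bfun_ndel, Bfun_ndel, Qpoly, sub_mul, Bfun_sub_right]
  ring_nf

lemma single_one_add_single_one {i j k : Fin d} :
    Finsupp.single j 1 + Finsupp.single k 1 = Finsupp.single i 2 ↔ j = i ∧ k = i := by
  constructor
  · intro h
    have hh := congrArg (fun m : Fin d →₀ ℕ => m i) h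
    simp only [Finsupp.coe_add, Pi.add_apply, Finsupp.single_apply, if_pos rfl] at hh
    constructor
    · by_contra hji; rw [if_neg hji] at hh; split_ifs at hh <;> omega
    · by_contra hki; rw [if_neg hki] at hh; split_ifs at hh <;> omega
  · rintro ⟨rfl, rfl⟩
    rw [← Finsupp.single_add]

lemma coeff_Qpoly (n : Fin d → ℂ) (i : Fin d) :
    coeff (Finsupp.single i 2) (Qpoly n) = 1 - n i ^ 2 := by
  rw [Qpoly, coeff_sub]
  congr 1
  · rw [coeff_sum]
    rw [Finset.sum_eq_single i
      (fun j _ hj => by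
        rw [X_pow_eq_monomial, coeff_monomial,
          if_neg (fun h => hj (by
            have := congrArg (fun m : Fin d →₀ ℕ => m j) h
            simp [Finsupp.single_apply] at this
            exact this.symm))])
      (fun h => absurd (Finset.mem_univ i) h)]
    rw [X_pow_eq_monomial, coeff_monomial, if_pos rfl]
  · rw [sq, Finset.sum_mul_sum, coeff_sum]
    have hterm : ∀ j, (∑ k : Fin d,
        coeff (Finsupp.single i 2) ((C (n j) * X j) * (C (n k) * X k)))
        = if j = i then n i * n i else 0 := by
      intro j
      have hjk : ∀ j k : Fin d, (C (n j) * X j) * (C (n k) * X k)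
          = monomial (Finsupp.single j 1 + Finsupp.single k 1) (n j * n k) := by
        intro j k
        rw [X, X, C_mul_monomial, C_mul_monomial, monomial_mul]
        ring_nf
      rcases eq_or_ne j i with rfl | hji
      · rw [if_pos rfl, Finset.sum_eq_single j
          (fun k _ hk => by
            rw [hjk, coeff_monomial,
              if_neg (fun h => hk (single_one_add_single_one.mp h).2)])
          (fun h => absurd (Finset.mem_univ j) h)]
        rw [hjk, coeff_monomial, if_pos (single_one_add_single_one.mpr ⟨rfl, rfl⟩)]
      · rw [if_neg hji]
        refine Finset.sum_eq_zero fun k _ => ?_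
        rw [hjk, coeff_monomial, if_neg (fun h => hji (single_one_add_single_one.mp h).1)]
    rw [Finset.sum_congr rfl fun j _ => by rw [coeff_sum]]
    rw [Finset.sum_congr rfl fun j _ => hterm j]
    rw [Finset.sum_ite_eq' Finset.univ i (fun _ => n i * n i), if_pos (Finset.mem_univ i), sq]

lemma Qpoly_ne_zero (hd : 2 ≤ d) (n : Fin d → ℂ) (hn : ∑ i, n i ^ 2 = 1) :
    Qpoly n ≠ 0 := by
  intro h
  have hi : ∀ i : Fin d, n i ^ 2 = 1 := by
    intro i
    have := coeff_Qpoly n i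
    rw [h, coeff_zero] at this
    linear_combination this
  have : (1 : ℂ) = (d : ℂ) := by
    rw [← hn, Finset.sum_congr rfl fun i _ => hi i]
    simp
  have : (d : ℂ) = ((1 : ℕ) : ℂ) := by exact_mod_cast this.symm
  have := Nat.cast_injective (R := ℂ) this
  omega

lemma td_pderiv {i : Fin d} {f : MvPolynomial (Fin d) ℂ} {m : ℕ}
    (h : f.totalDegree ≤ m + 1) : (pderiv i f).totalDegree ≤ m := by
  rw [totalDegree]
  refine Finset.sup_le fun a ha => ?_
  have hc : coeff a (pderiv i f) ≠ 0 := MvPolynomial.mem_support_iff.mp ha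
  rw [coeff_pderiv'] at hc
  have hc2 : coeff (a + Finsupp.single i 1) f ≠ 0 := fun h0 => hc (by rw [h0, mul_zero])
  have hle : ((a + Finsupp.single i 1 : Fin d →₀ ℕ).sum fun _ e => e) ≤ m + 1 :=
    le_trans (le_totalDegree (MvPolynomial.mem_support_iff.mpr hc2)) h
  rw [Finsupp.sum_add_index' (fun _ => rfl) (fun _ _ _ => rfl),
    Finsupp.sum_single_index rfl] at hle
  omega

lemma td_ndel {n : Fin d → ℂ} {f : MvPolynomial (Fin d) ℂ} {m : ℕ}
    (h : f.totalDegree ≤ m + 1) : (ndel n f).totalDegree ≤ m := by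
  rw [ndel]
  refine (totalDegree_finset_sum _ _).trans (Finset.sup_le fun i _ => ?_)
  refine (totalDegree_mul _ _).trans ?_
  rw [totalDegree_C]
  simpa using td_pderiv (i := i) h

lemma td_T {n : Fin d → ℂ} {f : MvPolynomial (Fin d) ℂ} {m : ℕ}
    (h : f.totalDegree ≤ m + 2) : (lap f - ndel n (ndel n f)).totalDegree ≤ m := by
  rw [sub_eq_add_neg]
  refine (totalDegree_add _ _).trans (max_le ?_ ?_)
  · rw [lap]
    refine (totalDegree_finset_sum _ _).trans (Finset.sup_le fun i _ => ?_)
    exact td_pderiv (td_pderiv h)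
  · rw [totalDegree_neg]
    exact td_ndel (td_ndel h)

lemma td_Qpoly (n : Fin d → ℂ) : (Qpoly n).totalDegree ≤ 2 := by
  rw [Qpoly, sub_eq_add_neg]
  refine (totalDegree_add _ _).trans (max_le ?_ ?_)
  · refine (totalDegree_finset_sum _ _).trans (Finset.sup_le fun i _ => ?_)
    refine (totalDegree_pow _ _).trans ?_
    simp [totalDegree_X]
  · rw [totalDegree_neg]
    refine (totalDegree_pow _ _).trans ?_
    have h1 : (∑ i : Fin d, C (n i) * X i).totalDegree ≤ 1 := by
      refine (totalDegree_finset_sum _ _).trans (Finset.sup_le fun i _ => ?_)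
      refine (totalDegree_mul _ _).trans ?_
      simp [totalDegree_X, totalDegree_C]
    omega

lemma eq_zero_of_Bfun {m : ℕ} {g : MvPolynomial (Fin d) ℂ} (hdeg : g.totalDegree ≤ m)
    (h : ∀ f : MvPolynomial (Fin d) ℂ, f.totalDegree ≤ m → Bfun f g = 0) : g = 0 := by
  ext a
  rw [coeff_zero]
  rcases le_or_gt (a.sum fun _ e => e) m with ha | ha
  · have hf : (monomial a (1 : ℂ)).totalDegree ≤ m := by
      rw [totalDegree_monomial a (one_ne_zero)]
      exact ha
    have := h _ hf
    rw [Bfun_monomial_left, mul_one] at this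
    exact (mul_eq_zero.mp this).resolve_left (wt_ne_zero a)
  · exact coeff_eq_zero_of_totalDegree_lt (lt_of_le_of_lt hdeg ha)

set_option maxHeartbeats 1000000 in
theorem lap_sub_ndel_sq_surjective (d : ℕ) (hd : 2 ≤ d) (n : Fin d → ℂ)
    (hn : ∑ i, n i ^ 2 = 1) :
    ∀ σ : MvPolynomial (Fin d) ℂ, ∃ α : MvPolynomial (Fin d) ℂ,
      lap α - ndel n (ndel n α) = σ := by
  intro σ
  set k := σ.totalDegree with hk
  set V2 := restrictTotalDegree (Fin d) ℂ (k + 2) with hV2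
  set V0 := restrictTotalDegree (Fin d) ℂ k with hV0
  have hmap : ∀ f ∈ V2, Tlin n f ∈ V0 := by
    intro f hf
    rw [hV0, mem_restrictTotalDegree, Tlin_apply]
    exact td_T ((mem_restrictTotalDegree _ _ _).mp hf)
  let T' : V2 →ₗ[ℂ] V0 := (Tlin n).restrict hmap
  -- the pairing map β : V0 → Dual V0
  let A : V0 →ₗ[ℂ] (MvPolynomial (Fin d) ℂ →ₗ[ℂ] ℂ) := Bform.comp V0.subtype
  let β : V0 →ₗ[ℂ] Module.Dual ℂ V0 := A.flip.comp V0.subtype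
  have hβ : ∀ (g f : V0), β g f = Bfun f.1 g.1 := fun g f => rfl
  have hβinj : Function.Injective β := by
    rw [injective_iff_map_eq_zero]
    intro g hg
    refine Subtype.ext (eq_zero_of_Bfun (m := k) ((mem_restrictTotalDegree _ _ _).mp g.2)
      fun f hf => ?_)
    have := congrFun (congrArg DFunLike.coe hg) ⟨f, (mem_restrictTotalDegree _ _ _).mpr hf⟩
    simpa [hβ] using this
  have hβsurj : Function.Surjective β :=
    (LinearMap.injective_iff_surjective_of_finrank_eq_finrank
      (Subspace.dual_finrank_eq).symm).mp hβinj
  have hrange : LinearMap.range T' = ⊤ := by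
    rw [← Subspace.dualAnnihilator_inj, Submodule.dualAnnihilator_top]
    rw [Submodule.eq_bot_iff]
    intro φ hφ
    obtain ⟨g, rfl⟩ := hβsurj φ
    have hQg : Qpoly n * g.1 = 0 := by
      have hdeg : (Qpoly n * g.1).totalDegree ≤ k + 2 := by
        refine (totalDegree_mul _ _).trans ?_
        have h1 := td_Qpoly n
        have h2 := (mem_restrictTotalDegree _ _ _).mp g.2
        omega
      refine eq_zero_of_Bfun hdeg fun f hf => ?_
      have hfm : f ∈ V2 := (mem_restrictTotalDegree _ _ _).mpr hf
      have h0 : β g (T' ⟨f, hfm⟩) = 0 :=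
        (Submodule.mem_dualAnnihilator _).mp hφ _ ⟨⟨f, hfm⟩, rfl⟩
      rw [hβ] at h0
      have hTval : (T' ⟨f, hfm⟩ : MvPolynomial (Fin d) ℂ) = Tlin n f :=
        LinearMap.restrict_coe_apply _ _ _
      rw [hTval, Tlin_apply, Bfun_T] at h0
      exact h0
    rcases mul_eq_zero.mp hQg with h | h
    · exact absurd h (Qpoly_ne_zero hd n hn)
    · have : g = 0 := Subtype.ext h
      rw [this, map_zero]
  have hσ : σ ∈ V0 := (mem_restrictTotalDegree _ _ _).mpr le_rfl
  have : (⟨σ, hσ⟩ : V0) ∈ LinearMap.range T' := hrange ▸ Submodule.mem_top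
  obtain ⟨f, hf⟩ := this
  refine ⟨f.1, ?_⟩
  have := congrArg Subtype.val hf
  rw [LinearMap.restrict_coe_apply, Tlin_apply] at this
  exact this
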